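/- Let ω < 0, 0 < α ≤ 1 and 0 < αγ ≤ β ≤ 1. For every s ∈ ℂ with Re(s) ≥ 0 and s ≠ 0, one has Re(F(s)) > 0; equivalently |Arg(F(s))| < π/2. (In the proof one shows Arg(F(s)) = (β − αγ)Arg(s) + γ·Arg(s^α − ω) and |Arg(F(s))| ≤ β·|Arg(s)| ≤ π/2 with strict inequality.) -/

import Mathlib

open Real Complex Filter Set Topology

/-- The curve parametrization Λ(θ) bounding the stability region. -/
noncomputable def Lam (α β γ ω : ℝ) (θ : ℝ) : ℂ :=
  ((|ω| ^ (β / α) * Real.sin θ ^ (β / α - γ) * Real.sin (α * π / 2) ^ γ *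
      Real.sin (α * π / 2 - θ) ^ (-(β / α)) : ℝ) : ℂ) *
    Complex.exp (Complex.I * ((γ * θ + (β - α * γ) * π / 2 : ℝ) : ℂ))

/-- The characteristic function F(s) = s^(β-αγ) (s^α - ω)^γ (principal branches). -/
noncomputable def Fc (α β γ ω : ℝ) (s : ℂ) : ℂ :=
  s ^ ((β - α * γ : ℝ) : ℂ) * (s ^ ((α : ℝ) : ℂ) - (ω : ℂ)) ^ ((γ : ℝ) : ℂ)

/-- μ(θ) = (|ω| sin θ / sin(απ/2 - θ))^(1/α). -/
noncomputable def muP (α ω : ℝ) (θ : ℝ) : ℝ :=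
  (|ω| * Real.sin θ / Real.sin (α * π / 2 - θ)) ^ (1 / α)

/-- ρ(θ) = |ω| sin(απ/2) / sin(απ/2 - θ). -/
noncomputable def rhoP (α ω : ℝ) (θ : ℝ) : ℝ :=
  |ω| * Real.sin (α * π / 2) / Real.sin (α * π / 2 - θ)

lemma arg_exp_of (z : ℂ) (h₁ : -π < z.im) (h₂ : z.im ≤ π) : (Complex.exp z).arg = z.im := by
  rw [Complex.exp_eq_exp_re_mul_sin_add_cos, ← Complex.ofReal_exp,
    Complex.arg_real_mul _ (Real.exp_pos _), Complex.arg_cos_add_sin_mul_I ⟨h₁, h₂⟩]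

lemma arg_cpow_real {s : ℂ} (hs : s ≠ 0) {t : ℝ} (h₁ : -π < t * s.arg)
    (h₂ : t * s.arg ≤ π) : (s ^ (t : ℂ)).arg = t * s.arg := by
  rw [Complex.cpow_def_of_ne_zero hs]
  have him : (Complex.log s * (t : ℂ)).im = t * s.arg := by
    simp [Complex.log_im, mul_comm]
  rw [arg_exp_of _ (by rw [him]; exact h₁) (by rw [him]; exact h₂), him]

lemma sin_abs_of (a : ℝ) (h : |a| ≤ π) : Real.sin |a| = |Real.sin a| := by
  rcases abs_cases a with ⟨h1, h2⟩ | ⟨h1, h2⟩ <;> rw [h1]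
  · rw [_root_.abs_of_nonneg (Real.sin_nonneg_of_nonneg_of_le_pi h2 (h1 ▸ h))]
  · rw [Real.sin_neg, abs_of_nonpos]
    have h3 : 0 ≤ Real.sin (-a) := Real.sin_nonneg_of_nonneg_of_le_pi (by linarith) (h1 ▸ h)
    rw [Real.sin_neg] at h3; linarith

lemma arg_add_pos_lt {w : ℂ} (hw : 0 ≤ w.re) (him : w.im ≠ 0) {r : ℝ} (hr : 0 < r) :
    |(w + (r : ℂ)).arg| < |w.arg| := by
  have hw0 : w ≠ 0 := fun h => him (by simp [h])
  have hwabs : 0 < ‖w‖ := norm_pos_iff.mpr hw0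
  have habs : ‖w‖ < ‖w + r‖ := by
    have h2 : ‖w‖ ^ 2 < ‖w + r‖ ^ 2 := by
      simp only [Complex.sq_norm, Complex.normSq_apply, Complex.add_re, Complex.add_im,
        Complex.ofReal_re, Complex.ofReal_im]
      nlinarith
    exact lt_of_pow_lt_pow_left₀ 2 (norm_nonneg _) h2
  have hsin : |Real.sin (w + (r : ℂ)).arg| < |Real.sin w.arg| := by
    rw [Complex.sin_arg, Complex.sin_arg, abs_div, abs_div]
    simp only [Complex.add_im, Complex.ofReal_im, add_zero]
    rw [_root_.abs_of_nonneg (norm_nonneg w), _root_.abs_of_nonneg (norm_nonneg (w + r))]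
    exact div_lt_div_of_pos_left (abs_pos.mpr him) hwabs habs
  have hb1 : |(w + (r : ℂ)).arg| ≤ π / 2 := by
    rw [Complex.abs_arg_le_pi_div_two_iff]
    simp only [Complex.add_re, Complex.ofReal_re]; linarith
  have hb2 : |w.arg| ≤ π / 2 := Complex.abs_arg_le_pi_div_two_iff.mpr hw
  have hpi := Real.pi_pos
  by_contra hcon
  push_neg at hcon
  have hmono := Real.strictMonoOn_sin.monotoneOn
    (a := |w.arg|) (b := |(w + (r : ℂ)).arg|)
    ⟨by linarith [abs_nonneg w.arg], by linarith⟩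
    ⟨by linarith [abs_nonneg (w + (r : ℂ)).arg], by linarith⟩ hcon
  rw [sin_abs_of _ (by linarith), sin_abs_of _ (by linarith)] at hmono
  linarith

theorem F_re_pos_on_right_half_plane (α β γ ω : ℝ) (hω : ω < 0) (hα0 : 0 < α) (hα1 : α ≤ 1)
    (hαγ : 0 < α * γ) (hβ0 : α * γ ≤ β) (hβ1 : β ≤ 1) :
    ∀ s : ℂ, 0 ≤ s.re → s ≠ 0 →
      0 < (Fc α β γ ω s).re ∧ |(Fc α β γ ω s).arg| < π / 2 := by
  intro s hre hs0
  have hpi := Real.pi_pos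
  have hγ : 0 < γ := by nlinarith
  set A := s.arg with hA_def
  have hA : |A| ≤ π / 2 := Complex.abs_arg_le_pi_div_two_iff.mpr hre
  have hAnn := abs_nonneg A
  have hαA : |α * A| ≤ π / 2 := by
    rw [abs_mul, abs_of_pos hα0]; nlinarith
  set w := s ^ ((α : ℝ) : ℂ) with hw_def
  have hw0 : w ≠ 0 := by
    rw [hw_def, Complex.cpow_def_of_ne_zero hs0]; exact Complex.exp_ne_zero _
  have hargw : w.arg = α * A :=
    arg_cpow_real hs0 (by cases abs_le.mp hαA; linarith) (by cases abs_le.mp hαA; linarith)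
  have hRew : 0 ≤ w.re := Complex.abs_arg_le_pi_div_two_iff.mp (by rw [hargw]; exact hαA)
  set u := w - (ω : ℂ) with hu_def
  have hu_eq : u = w + ((-ω : ℝ) : ℂ) := by rw [hu_def]; push_cast; ring
  have hRu : 0 < u.re := by
    rw [hu_eq]
    simp only [Complex.add_re, Complex.ofReal_re]
    linarith
  have hu0 : u ≠ 0 := fun h => by simp [h] at hRu
  set B := u.arg with hB_def
  have hB2 : |B| ≤ π / 2 := Complex.abs_arg_le_pi_div_two_iff.mpr hRu.le
  have hkey : (A = 0 ∧ B = 0) ∨ |B| < α * |A| := by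
    by_cases hA0 : A = 0
    · left
      refine ⟨hA0, ?_⟩
      have hw_arg : w.arg = 0 := by rw [hargw, hA0, mul_zero]
      obtain ⟨h1, h2⟩ := Complex.arg_eq_zero_iff.mp hw_arg
      apply Complex.arg_eq_zero_iff.mpr
      refine ⟨hRu.le, ?_⟩
      rw [hu_eq]
      simp [Complex.add_im, Complex.ofReal_im, h2]
    · right
      have hαA0 : α * A ≠ 0 := mul_ne_zero hα0.ne' hA0
      have hsin : Real.sin (α * A) ≠ 0 := by
        intro h
        have h1 : 0 < |α * A| := abs_pos.mpr hαA0
        have h2 : 0 < Real.sin |α * A| :=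
          Real.sin_pos_of_pos_of_lt_pi h1 (by linarith)
        rw [sin_abs_of _ (by linarith)] at h2
        rw [h] at h2; simp at h2
      have himw : w.im ≠ 0 := by
        intro h
        apply hsin
        have := Complex.norm_mul_sin_arg w
        rw [hargw, h] at this
        rcases mul_eq_zero.mp this with h' | h'
        · exact absurd h' (norm_ne_zero_iff.mpr hw0)
        · exact h'
      have hlt := arg_add_pos_lt hRew himw (show (0:ℝ) < -ω by linarith)
      calc |B| = |(w + ((-ω : ℝ) : ℂ)).arg| := by rw [hB_def, hu_eq]
        _ < |w.arg| := hlt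
        _ = α * |A| := by rw [hargw, abs_mul, abs_of_pos hα0]
  have hβαγ : 0 ≤ β - α * γ := by linarith
  have hT : |(β - α * γ) * A + γ * B| < π / 2 := by
    rcases hkey with ⟨hA0, hB0⟩ | hBlt
    · rw [hA0, hB0]; simp; linarith
    · have h1 : |(β - α * γ) * A + γ * B| ≤ (β - α * γ) * |A| + γ * |B| := by
        calc |(β - α * γ) * A + γ * B| ≤ |(β - α * γ) * A| + |γ * B| := abs_add_le _ _
          _ = (β - α * γ) * |A| + γ * |B| := by
            rw [abs_mul, abs_mul, _root_.abs_of_nonneg hβαγ, _root_.abs_of_pos hγ]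
      nlinarith
  have hFc : Fc α β γ ω s =
      Complex.exp (Complex.log s * ((β - α * γ : ℝ) : ℂ) + Complex.log u * ((γ : ℝ) : ℂ)) := by
    rw [Fc, Complex.cpow_def_of_ne_zero hs0, ← hw_def, ← hu_def,
      Complex.cpow_def_of_ne_zero hu0, ← Complex.exp_add]
  have him : (Complex.log s * ((β - α * γ : ℝ) : ℂ) + Complex.log u * ((γ : ℝ) : ℂ)).im
      = (β - α * γ) * A + γ * B := by
    simp [Complex.add_im, Complex.mul_im, Complex.log_im, Complex.ofReal_re,
      Complex.ofReal_im, hA_def, hB_def]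
    ring
  obtain ⟨hT1, hT2⟩ := abs_lt.mp hT
  constructor
  · rw [hFc, Complex.exp_re, him]
    exact mul_pos (Real.exp_pos _) (Real.cos_pos_of_mem_Ioo ⟨hT1, hT2⟩)
  · rw [hFc, arg_exp_of _ (by rw [him]; linarith) (by rw [him]; linarith), him]
    exact hT
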